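/- Let n = 2k for a positive even integer k. Up to permutation similarity, signature similarity, and transposition, there is exactly one n-by-n absolutely flat idempotent of rank 2 with constant 1/k. -/

import Mathlib

open Matrix

namespace AFIaux

open Finset

def Gz : Fin 4 → Fin 4 → ℤ := fun a b =>
  if (a.val < 2 ∧ b.val = 3) ∨ (2 ≤ a.val ∧ b.val = 1) then -1 else 1

/-- the 4×4 sign pattern -/
def G : Fin 4 → Fin 4 → ℝ := fun a b => ((Gz a b : ℤ) : ℝ)

lemma G_pm (a b : Fin 4) : G a b = 1 ∨ G a b = -1 := by
  unfold G Gz; split <;> simp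

lemma G_sum (a b : Fin 4) : ∑ y : Fin 4, G a y * G y b = 2 * G a b := by
  have h : ∀ a b : Fin 4, ∑ y : Fin 4, Gz a y * Gz y b = 2 * Gz a b := by decide
  have h2 := congrArg (fun z : ℤ => (z : ℝ)) (h a b)
  push_cast at h2
  unfold G
  exact h2

lemma G_eval : G 0 0 = 1 ∧ G 0 1 = 1 ∧ G 0 2 = 1 ∧ G 0 3 = -1 ∧
    G 2 0 = 1 ∧ G 2 1 = -1 ∧ G 2 2 = 1 ∧ G 2 3 = 1 := by
  refine ⟨?_, ?_, ?_, ?_, ?_, ?_, ?_, ?_⟩ <;> (unfold G Gz; norm_num) <;> decide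

lemma G_row0 (a b : Fin 4) (h : a.val < 2) : G a b = G 0 b := by
  unfold G Gz
  congr 2
  simp only [eq_iff_iff]
  constructor <;> (intro h'; omega)

lemma G_row2 (a b : Fin 4) (h : 2 ≤ a.val) : G a b = G 2 b := by
  unfold G Gz
  congr 2
  simp only [eq_iff_iff]
  constructor <;> (intro h'; omega)

lemma pm_agree {n : ℕ} {a : ℝ} {u v : Fin n → ℝ}
    (hu : ∀ j, u j = a ∨ u j = -a) (hv : ∀ j, v j = a ∨ v j = -a)
    (huv' : u ≠ -v) : ∃ j, u j = v j := by
  by_contra h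
  push_neg at h
  apply huv'
  funext j
  have hne := h j
  show u j = -(v j)
  rcases hu j with h1 | h1 <;> rcases hv j with h2 | h2 <;>
    simp [h1, h2] at hne ⊢

lemma pm_disagree {n : ℕ} {a : ℝ} {u v : Fin n → ℝ}
    (hu : ∀ j, u j = a ∨ u j = -a) (hv : ∀ j, v j = a ∨ v j = -a)
    (huv : u ≠ v) : ∃ j, u j = -(v j) := by
  by_contra h
  push_neg at h
  apply huv
  funext j
  have hne := h j
  rcases hu j with h1 | h1 <;> rcases hv j with h2 | h2 <;>
    simp [h1, h2] at hne ⊢ <;> linarith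

/-- classification of ±a vectors in the span of two nonproportional ±a vectors -/
lemma pm_span {n : ℕ} {a : ℝ} (ha : 0 < a) {u v w : Fin n → ℝ}
    (hu : ∀ j, u j = a ∨ u j = -a) (hv : ∀ j, v j = a ∨ v j = -a)
    (hw : ∀ j, w j = a ∨ w j = -a)
    (huv : u ≠ v) (huv' : u ≠ -v)
    {α β : ℝ} (hlin : w = α • u + β • v) :
    w = u ∨ w = -u ∨ w = v ∨ w = -v := by
  have ha0 : a ≠ 0 := ne_of_gt ha
  obtain ⟨j₀, hj₀⟩ : ∃ j, u j = v j := pm_agree hu hv huv'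
  obtain ⟨j₁, hj₁⟩ : ∃ j, u j = -(v j) := pm_disagree hu hv huv
  have e0 : (α + β) * u j₀ = w j₀ := by
    rw [hlin]; simp only [Pi.add_apply, Pi.smul_apply, smul_eq_mul]
    rw [← hj₀]; ring
  have e1 : (α - β) * u j₁ = w j₁ := by
    rw [hlin]; simp only [Pi.add_apply, Pi.smul_apply, smul_eq_mul]
    rw [hj₁]; ring
  have h1 : α + β = 1 ∨ α + β = -1 := by
    rcases hu j₀ with h | h <;> rcases hw j₀ with h' | h' <;>
        rw [h, h'] at e0 <;> [left; right; right; left]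
    · exact mul_right_cancel₀ ha0 (by linarith : (α + β) * a = 1 * a)
    · exact mul_right_cancel₀ ha0 (by linarith : (α + β) * a = (-1) * a)
    · exact mul_right_cancel₀ ha0 (by linarith : (α + β) * a = (-1) * a)
    · exact mul_right_cancel₀ ha0 (by linarith : (α + β) * a = 1 * a)
  have h2 : α - β = 1 ∨ α - β = -1 := by
    rcases hu j₁ with h | h <;> rcases hw j₁ with h' | h' <;>
        rw [h, h'] at e1 <;> [left; right; right; left]
    · exact mul_right_cancel₀ ha0 (by linarith : (α - β) * a = 1 * a)
    · exact mul_right_cancel₀ ha0 (by linarith : (α - β) * a = (-1) * a)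
    · exact mul_right_cancel₀ ha0 (by linarith : (α - β) * a = (-1) * a)
    · exact mul_right_cancel₀ ha0 (by linarith : (α - β) * a = 1 * a)
  have hαβ : (α = 1 ∧ β = 0) ∨ (α = 0 ∧ β = 1) ∨ (α = 0 ∧ β = -1) ∨ (α = -1 ∧ β = 0) := by
    rcases h1 with h1 | h1 <;> rcases h2 with h2 | h2
    · exact Or.inl ⟨by linarith, by linarith⟩
    · exact Or.inr (Or.inl ⟨by linarith, by linarith⟩)
    · exact Or.inr (Or.inr (Or.inl ⟨by linarith, by linarith⟩))
    · exact Or.inr (Or.inr (Or.inr ⟨by linarith, by linarith⟩))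
  rcases hαβ with ⟨hα, hβ⟩ | ⟨hα, hβ⟩ | ⟨hα, hβ⟩ | ⟨hα, hβ⟩ <;> rw [hlin, hα, hβ]
  · left; funext j; simp
  · right; right; left; funext j; simp
  · right; right; right; funext j; simp
  · right; left; funext j; simp

/-- counting lemma for ±a valued functions -/
lemma sum_pm {ι : Type*} (s : Finset ι) (f : ι → ℝ) (a : ℝ)
    [DecidablePred fun i => f i = a]
    (hf : ∀ i ∈ s, f i = a ∨ f i = -a) :
    ∑ i ∈ s, f i =
      ((s.filter fun i => f i = a).card : ℝ) * a
        - ((s.filter fun i => ¬ f i = a).card : ℝ) * a := by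
  have h1 : ∑ i ∈ s.filter (fun i => f i = a), f i
      = ((s.filter fun i => f i = a).card : ℝ) * a := by
    rw [Finset.sum_congr rfl (fun i hi => (Finset.mem_filter.mp hi).2), Finset.sum_const,
      nsmul_eq_mul]
  have h2 : ∑ i ∈ s.filter (fun i => ¬ f i = a), f i
      = ((s.filter fun i => ¬ f i = a).card : ℝ) * (-a) := by
    have key : ∀ i ∈ s.filter (fun i => ¬ f i = a), f i = -a := by
      intro i hi
      rcases hf i (Finset.mem_filter.mp hi).1 with h | h
      · exact absurd h (Finset.mem_filter.mp hi).2
      · exact h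
    rw [Finset.sum_congr rfl key, Finset.sum_const, nsmul_eq_mul]
  rw [← Finset.sum_filter_add_sum_filter_not s (fun i => f i = a), h1, h2]; ring

lemma conj_entry {n : ℕ} (σ : Equiv.Perm (Fin n)) (ε : Fin n → ℝ)
    (A : Matrix (Fin n) (Fin n) ℝ) (i j : Fin n) :
    (Matrix.diagonal ε * (σ.permMatrix ℝ * A * (σ.permMatrix ℝ)ᵀ) * Matrix.diagonal ε) i j
      = ε i * A (σ i) (σ j) * ε j := by
  have ht : (σ.permMatrix ℝ)ᵀ = (σ.symm).toPEquiv.toMatrix := by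
    rw [Equiv.toPEquiv_symm, PEquiv.toMatrix_symm]
  have h1 : σ.permMatrix ℝ * A * (σ.permMatrix ℝ)ᵀ = A.submatrix σ σ := by
    rw [ht, Equiv.Perm.permMatrix, PEquiv.toMatrix_toPEquiv_mul,
      PEquiv.mul_toMatrix_toPEquiv, Equiv.symm_symm]
    rfl
  rw [h1, Matrix.mul_apply]
  simp [Matrix.diagonal_apply, Finset.sum_ite_eq, Matrix.mul_apply]

/-- fibers of the first-coordinate map through an equivalence -/
def fiberEquiv {n m : ℕ} (e : Fin n ≃ Fin 4 × Fin m) (y : Fin 4) :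
    {i // (e i).1 = y} ≃ Fin m where
  toFun := fun x => (e x.1).2
  invFun := fun z => ⟨e.symm (y, z), by simp⟩
  left_inv := by
    rintro ⟨i, hi⟩
    apply Subtype.ext
    show e.symm (y, (e i).2) = i
    rw [← hi, Prod.mk.eta, Equiv.symm_apply_apply]
  right_inv := fun z => by simp

lemma fiber_card {n m : ℕ} (e : Fin n ≃ Fin 4 × Fin m) (y : Fin 4) :
    Fintype.card {i // (e i).1 = y} = m := by
  rw [Fintype.card_congr (fiberEquiv e y), Fintype.card_fin]

/-- a permutation matching two functions with equinumerous fibers -/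
noncomputable def permOfFiberCard {n : ℕ} (c c₀ : Fin n → Fin 4)
    (h : ∀ y, Fintype.card {x // c x = y} = Fintype.card {x // c₀ x = y}) :
    Equiv.Perm (Fin n) :=
  (Equiv.sigmaFiberEquiv c₀).symm.trans
    ((Equiv.sigmaCongrRight fun y => Fintype.equivOfCardEq (h y).symm).trans
      (Equiv.sigmaFiberEquiv c))

lemma permOfFiberCard_spec {n : ℕ} (c c₀ : Fin n → Fin 4)
    (h : ∀ y, Fintype.card {x // c x = y} = Fintype.card {x // c₀ x = y}) (x : Fin n) :
    c (permOfFiberCard c c₀ h x) = c₀ x :=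
  ((Equiv.sigmaCongrRight fun y => Fintype.equivOfCardEq (h y).symm)
    ((Equiv.sigmaFiberEquiv c₀).symm x)).2.2

end AFIaux

/-- An `(n,k,2)` absolutely flat idempotent. -/
def IsAFI2 (n k : ℕ) (A : Matrix (Fin n) (Fin n) ℝ) : Prop :=
  A * A = A ∧ A.rank = 2 ∧ ∀ i j, A i j = 1 / k ∨ A i j = -(1 / k)

/-- Equivalence generated by permutation similarity, signature similarity,
and transposition. -/
def AFIEquiv {n : ℕ} (A B : Matrix (Fin n) (Fin n) ℝ) : Prop :=
  ∃ (σ : Equiv.Perm (Fin n)) (ε : Fin n → ℝ), (∀ i, ε i = 1 ∨ ε i = -1) ∧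
    (B = Matrix.diagonal ε * (σ.permMatrix ℝ * A * (σ.permMatrix ℝ)ᵀ) *
          Matrix.diagonal ε ∨
     B = Matrix.diagonal ε * (σ.permMatrix ℝ * Aᵀ * (σ.permMatrix ℝ)ᵀ) *
          Matrix.diagonal ε)

open AFIaux

theorem stmt_15 (k : ℕ) (hk : 0 < k) (hke : Even k) :
    ∃ A : Matrix (Fin (2 * k)) (Fin (2 * k)) ℝ, IsAFI2 (2 * k) k A ∧
      ∀ B : Matrix (Fin (2 * k)) (Fin (2 * k)) ℝ, IsAFI2 (2 * k) k B →
        AFIEquiv A B := by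
  classical
  obtain ⟨m, hm⟩ := hke
  have hm0 : 0 < m := by omega
  have h4m : 4 * m = 2 * k := by omega
  haveI : NeZero (2 * k) := ⟨by omega⟩
  have hk0 : ((k : ℝ)) ≠ 0 := Nat.cast_ne_zero.mpr hk.ne'
  set a : ℝ := 1 / (k : ℝ) with ha_def
  have ha : 0 < a := by positivity
  have ha0 : a ≠ 0 := ne_of_gt ha
  have hk2 : (m : ℝ) * 2 = (k : ℝ) := by push_cast [hm]; ring
  have hka : (m : ℝ) * 2 * a = 1 := by rw [hk2, ha_def]; field_simp
  have hka1 : (k : ℝ) * a = 1 := by rw [ha_def]; field_simp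
  obtain ⟨g00, g01, g02, g03, g20, g21, g22, g23⟩ := G_eval
  set e : Fin (2*k) ≃ Fin 4 × Fin m := (finProdFinEquiv.trans (finCongr h4m)).symm with he_def
  set c₀ : Fin (2*k) → Fin 4 := fun i => (e i).1 with hc₀_def
  have hc₀ : ∀ p, c₀ (e.symm p) = p.1 := fun p => by simp [hc₀_def]
  set A : Matrix (Fin (2*k)) (Fin (2*k)) ℝ :=
    Matrix.of (fun i j => G (c₀ i) (c₀ j) * a) with hA_def
  have hAapp : ∀ i j, A i j = G (c₀ i) (c₀ j) * a := fun i j => rfl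
  refine ⟨A, ⟨?_, ?_, ?_⟩, ?_⟩
  · -- A * A = A
    ext i j
    rw [Matrix.mul_apply]
    have step : ∀ t, A i t * A t j
        = (fun y => G (c₀ i) y * G y (c₀ j) * (a * a)) (c₀ t) := by
      intro t; simp only [hAapp]; ring
    rw [Finset.sum_congr rfl (fun t _ => step t)]
    have hsum : ∀ f : Fin 4 → ℝ, ∑ t : Fin (2*k), f (c₀ t) = (m : ℝ) * ∑ y : Fin 4, f y := by
      intro f
      rw [show (∑ t : Fin (2*k), f (c₀ t)) = ∑ p : Fin 4 × Fin m, f p.1 from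
        Equiv.sum_comp e (fun p => f p.1)]
      rw [Fintype.sum_prod_type]
      simp [Finset.sum_const, mul_comm, Finset.mul_sum]
    rw [hsum (fun y => G (c₀ i) y * G y (c₀ j) * (a * a))]
    have hfac : ∑ y : Fin 4, G (c₀ i) y * G y (c₀ j) * (a * a)
        = (∑ y : Fin 4, G (c₀ i) y * G y (c₀ j)) * (a * a) := by
      rw [Finset.sum_mul]
    rw [hfac, G_sum, hAapp]
    calc (m : ℝ) * (2 * G (c₀ i) (c₀ j) * (a * a))
        = ((m : ℝ) * 2 * a) * (G (c₀ i) (c₀ j) * a) := by ring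
      _ = G (c₀ i) (c₀ j) * a := by rw [hka, one_mul]
  · -- rank A = 2
    set u₀ : Fin (2*k) → ℝ := fun j => G 0 (c₀ j) * a with hu₀_def
    set v₀ : Fin (2*k) → ℝ := fun j => G 2 (c₀ j) * a with hv₀_def
    have hrowA : ∀ i, A i = u₀ ∨ A i = v₀ := by
      intro i
      rcases lt_or_ge (c₀ i).val 2 with h | h
      · left; funext j; rw [hAapp, G_row0 _ _ h]
      · right; funext j; rw [hAapp, G_row2 _ _ h]
    set t₀ : Fin (2*k) := e.symm (0, ⟨0, hm0⟩) with ht₀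
    set t₁ : Fin (2*k) := e.symm (1, ⟨0, hm0⟩) with ht₁
    set t₂ : Fin (2*k) := e.symm (2, ⟨0, hm0⟩) with ht₂
    have hct₀ : c₀ t₀ = 0 := hc₀ _
    have hct₁ : c₀ t₁ = 1 := hc₀ _
    have hct₂ : c₀ t₂ = 2 := hc₀ _
    have hAt₀ : A t₀ = u₀ := by
      funext j; rw [hAapp, hu₀_def]; rw [hct₀]
    have hAt₂ : A t₂ = v₀ := by
      funext j; rw [hAapp, hv₀_def]; rw [hct₂]
    have hind : LinearIndependent ℝ ![u₀, v₀] := by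
      rw [LinearIndependent.pair_iff]
      intro s t hst
      have h0 := congrFun hst t₀
      have h1 := congrFun hst t₁
      simp only [Pi.add_apply, Pi.smul_apply, smul_eq_mul, Pi.zero_apply,
        hu₀_def, hv₀_def, hct₀, hct₁, g00, g01, g20, g21] at h0 h1
      have hs : s * a = 0 := by linarith
      have ht : t * a = 0 := by linarith
      constructor
      · rcases mul_eq_zero.mp hs with h | h
        exacts [h, absurd h ha0]
      · rcases mul_eq_zero.mp ht with h | h
        exacts [h, absurd h ha0]
    have hspan : Submodule.span ℝ (Set.range A) = Submodule.span ℝ {u₀, v₀} := by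
      apply le_antisymm
      · rw [Submodule.span_le]
        rintro x ⟨i, rfl⟩
        rcases hrowA i with h | h <;> rw [h] <;> apply Submodule.subset_span <;> simp
      · rw [Submodule.span_le]
        rintro x hx
        rcases hx with rfl | hx
        · exact Submodule.subset_span ⟨t₀, hAt₀⟩
        · rcases hx with rfl
          exact Submodule.subset_span ⟨t₂, hAt₂⟩
    have hrange : ({u₀, v₀} : Set (Fin (2*k) → ℝ)) = Set.range ![u₀, v₀] := by
      ext x; simp [Fin.exists_fin_two]
      tauto
    rw [Matrix.rank_eq_finrank_span_row, show Set.range A.row = Set.range A from rfl, hspan, hrange, finrank_span_eq_card hind]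
    simp
  · -- entries of A
    intro i j
    rcases G_pm (c₀ i) (c₀ j) with h | h <;> rw [hAapp, h]
    · left; rw [one_mul, ha_def]
    · right; rw [neg_one_mul, ha_def]
  · -- uniqueness
    rintro B ⟨hBmul, hBrank, hBent⟩
    have hBrow : ∀ i j, B i j = a ∨ B i j = -a := by
      intro i j; rw [ha_def]; exact hBent i j
    -- find a second, independent row
    by_cases hex : ∃ i₁, B i₁ ≠ B 0 ∧ B i₁ ≠ -(B 0)
    swap
    · exfalso
      push_neg at hex
      have hall : ∀ i, B i = B 0 ∨ B i = -(B 0) := by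
        intro i
        by_contra h
        push_neg at h
        exact h.2 (hex i h.1)
      have hle : Submodule.span ℝ (Set.range B) ≤ Submodule.span ℝ {B 0} := by
        rw [Submodule.span_le]
        rintro x ⟨i, rfl⟩
        rcases hall i with h | h <;> rw [h]
        · exact Submodule.subset_span rfl
        · exact Submodule.neg_mem _ (Submodule.subset_span rfl)
      have hr1 : B.rank ≤ 1 := by
        rw [Matrix.rank_eq_finrank_span_row]
        refine le_trans (Submodule.finrank_mono hle) ?_
        refine le_trans (finrank_span_le_card _) ?_
        simp
      omega
    obtain ⟨i₁, hv1, hv2⟩ := hex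
    set u : Fin (2*k) → ℝ := B 0 with hu_def
    set v : Fin (2*k) → ℝ := B i₁ with hv_def
    have hupm : ∀ j, u j = a ∨ u j = -a := hBrow 0
    have hvpm : ∀ j, v j = a ∨ v j = -a := hBrow i₁
    have huv : u ≠ v := fun h => hv1 h.symm
    have huv' : u ≠ -v := by
      intro h
      apply hv2
      rw [show v = -u from by rw [h, neg_neg]]
    obtain ⟨j₀, hj₀⟩ := pm_agree hupm hvpm huv'
    obtain ⟨j₁, hj₁⟩ := pm_disagree hupm hvpm huv
    have hu0 : ∀ j, u j ≠ 0 := by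
      intro j; rcases hupm j with h | h <;> rw [h]
      · exact ha0
      · exact neg_ne_zero.mpr ha0
    have hv0 : ∀ j, v j ≠ 0 := by
      intro j; rcases hvpm j with h | h <;> rw [h]
      · exact ha0
      · exact neg_ne_zero.mpr ha0
    have hindB : LinearIndependent ℝ ![u, v] := by
      rw [LinearIndependent.pair_iff]
      intro s t hst
      have h0 := congrFun hst j₀
      have h1 := congrFun hst j₁
      simp only [Pi.add_apply, Pi.smul_apply, smul_eq_mul, Pi.zero_apply] at h0 h1
      rw [← hj₀] at h0
      rw [show v j₁ = -(u j₁) from by rw [hj₁, neg_neg]] at h1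
      have hst1 : (s + t) * u j₀ = 0 := by linear_combination h0
      have hst2 : (s - t) * u j₁ = 0 := by linear_combination h1
      have e1 : s + t = 0 := by
        rcases mul_eq_zero.mp hst1 with h | h
        exacts [h, absurd h (hu0 j₀)]
      have e2 : s - t = 0 := by
        rcases mul_eq_zero.mp hst2 with h | h
        exacts [h, absurd h (hu0 j₁)]
      constructor <;> linarith
    have hrangeuv : ({u, v} : Set (Fin (2*k) → ℝ)) = Set.range ![u, v] := by
      ext x; simp [Fin.exists_fin_two]
      tauto
    have hspanB : Submodule.span ℝ ({u, v} : Set (Fin (2*k) → ℝ))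
        = Submodule.span ℝ (Set.range B) := by
      apply Submodule.eq_of_le_of_finrank_le
      · rw [Submodule.span_le]
        rintro x hx
        rcases hx with rfl | hx
        · exact Submodule.subset_span ⟨0, rfl⟩
        · rcases hx with rfl
          exact Submodule.subset_span ⟨i₁, rfl⟩
      · rw [show Set.range B = Set.range B.row from rfl, ← Matrix.rank_eq_finrank_span_row, hBrank, hrangeuv,
          finrank_span_eq_card hindB]
        simp
    have hclass : ∀ i, B i = u ∨ B i = -u ∨ B i = v ∨ B i = -v := by
      intro i
      have hmem : B i ∈ Submodule.span ℝ ({u, v} : Set (Fin (2*k) → ℝ)) := by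
        rw [hspanB]; exact Submodule.subset_span ⟨i, rfl⟩
      obtain ⟨α, β, hab⟩ := Submodule.mem_span_pair.mp hmem
      exact pm_span ha hupm hvpm (hBrow i) huv huv' hab.symm
    -- distinctness of the four row values
    have hnuu : -u ≠ u := by
      intro h
      have := congrFun h j₀
      simp only [Pi.neg_apply] at this
      exact hu0 j₀ (by linarith)
    have hnuv : -u ≠ v := by
      intro h
      exact huv' (by rw [← h, neg_neg])
    have hnvu : -v ≠ u := fun h => huv' h.symm
    have hnvv : -v ≠ v := by
      intro h
      have := congrFun h j₀
      simp only [Pi.neg_apply] at this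
      exact hv0 j₀ (by linarith)
    -- signs and the index set
    obtain ⟨δ, hδspec⟩ : ∃ δ : Fin (2*k) → ℝ,
        ∀ i, δ i = if B i = u ∨ B i = v then 1 else -1 := ⟨_, fun _ => rfl⟩
    have hδpm : ∀ i, δ i = 1 ∨ δ i = -1 := by
      intro i; rw [hδspec i]; split <;> simp
    have hδsq : ∀ i, δ i * δ i = 1 := by
      intro i; rcases hδpm i with h | h <;> rw [h] <;> norm_num
    obtain ⟨Iset, hIset⟩ : ∃ s : Finset (Fin (2*k)),
        ∀ i, i ∈ s ↔ (B i = u ∨ B i = -u) :=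
      ⟨Finset.univ.filter (fun i => B i = u ∨ B i = -u), fun i => by simp⟩
    have h0I : (0 : Fin (2*k)) ∈ Iset := (hIset 0).mpr (Or.inl rfl)
    have hi₁I : i₁ ∉ Iset := by
      rw [hIset]
      rintro (h | h)
      · exact huv h.symm
      · exact hnuv h.symm
    obtain ⟨u'', hu''spec⟩ : ∃ w : Fin (2*k) → ℝ, ∀ j, w j = u j * δ j := ⟨_, fun _ => rfl⟩
    obtain ⟨v'', hv''spec⟩ : ∃ w : Fin (2*k) → ℝ, ∀ j, w j = v j * δ j := ⟨_, fun _ => rfl⟩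
    obtain ⟨B', hB'app⟩ : ∃ C : Matrix (Fin (2*k)) (Fin (2*k)) ℝ,
        ∀ i j, C i j = δ i * B i j * δ j := ⟨Matrix.of _, fun _ _ => rfl⟩
    have hB'row : ∀ i j, B' i j = if i ∈ Iset then u'' j else v'' j := by
      intro i j
      rw [hB'app]
      by_cases hI : i ∈ Iset
      · rw [if_pos hI]
        rcases (hIset i).mp hI with h | h
        · have hδi : δ i = 1 := by rw [hδspec i]; exact if_pos (Or.inl h)
          rw [hδi, h, hu''spec]; ring
        · have hδi : δ i = -1 := by
            rw [hδspec i]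
            refine if_neg ?_
            rintro (h' | h')
            · exact hnuu (h ▸ h')
            · exact hnuv (h ▸ h')
          rw [hδi, h]
          show -1 * (-u j) * δ j = u'' j
          rw [hu''spec]; ring
      · rw [if_neg hI]
        rcases hclass i with h | h | h | h
        · exact absurd ((hIset i).mpr (Or.inl h)) hI
        · exact absurd ((hIset i).mpr (Or.inr h)) hI
        · have hδi : δ i = 1 := by rw [hδspec i]; exact if_pos (Or.inr h)
          rw [hδi, h, hv''spec]; ring
        · have hδi : δ i = -1 := by
            rw [hδspec i]
            refine if_neg ?_
            rintro (h' | h')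
            · exact hnvu (h ▸ h')
            · exact hnvv (h ▸ h')
          rw [hδi, h]
          show -1 * (-v j) * δ j = v'' j
          rw [hv''spec]; ring
    have hu''pm : ∀ j, u'' j = a ∨ u'' j = -a := by
      intro j
      rw [hu''spec]
      rcases hupm j with h | h <;> rcases hδpm j with h' | h' <;>
        rw [h, h'] <;> [left; right; right; left] <;> ring
    have hv''pm : ∀ j, v'' j = a ∨ v'' j = -a := by
      intro j
      rw [hv''spec]
      rcases hvpm j with h | h <;> rcases hδpm j with h' | h' <;>
        rw [h, h'] <;> [left; right; right; left] <;> ring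
    have hu''0 : ∀ j, u'' j ≠ 0 := by
      intro j; rcases hu''pm j with h | h <;> rw [h]
      · exact ha0
      · exact neg_ne_zero.mpr ha0
    have hag : u'' j₀ = v'' j₀ := by rw [hu''spec, hv''spec, hj₀]
    have hdis : v'' j₁ = -(u'' j₁) := by rw [hu''spec, hv''spec, hj₁]; ring
    -- B' is idempotent
    have hB'mulapp : ∀ i j, ∑ t, B' i t * B' t j = B' i j := by
      intro i j
      have step' : ∀ t, B' i t * B' t j = δ i * (B i t * B t j) * δ j := by
        intro t
        have h1 : B' i t * B' t j = (δ t * δ t) * (δ i * (B i t * B t j) * δ j) := by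
          rw [hB'app, hB'app]; ring
        rw [h1, hδsq t, one_mul]
      rw [Finset.sum_congr rfl (fun t _ => step' t)]
      have hfac : ∑ t, δ i * (B i t * B t j) * δ j
          = δ i * (∑ t, B i t * B t j) * δ j := by
        rw [Finset.mul_sum, Finset.sum_mul]
      rw [hfac]
      have hBij : ∑ t, B i t * B t j = B i j := by
        have := congrFun (congrFun hBmul i) j
        rwa [Matrix.mul_apply] at this
      rw [hBij, hB'app]
    -- row sums against B'
    have hrowsum : ∀ (w : Fin (2*k) → ℝ) (j : Fin (2*k)),
        ∑ t, w t * B' t j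
          = (∑ t ∈ Iset, w t) * u'' j + (∑ t ∈ Isetᶜ, w t) * v'' j := by
      intro w j
      rw [← Finset.sum_add_sum_compl Iset (fun t => w t * B' t j)]
      congr 1
      · rw [Finset.sum_mul]
        refine Finset.sum_congr rfl ?_
        intro t ht
        rw [hB'row, if_pos ht]
      · rw [Finset.sum_mul]
        refine Finset.sum_congr rfl ?_
        intro t ht
        rw [hB'row, if_neg (Finset.mem_compl.mp ht)]
    have eqI : ∀ j, (∑ t ∈ Iset, u'' t) * u'' j + (∑ t ∈ Isetᶜ, u'' t) * v'' j = u'' j := by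
      intro j
      have h := hB'mulapp 0 j
      rw [Finset.sum_congr rfl
        (fun t _ => by rw [show B' 0 t = u'' t from by rw [hB'row, if_pos h0I]])] at h
      rw [hrowsum u'' j] at h
      rw [h, hB'row, if_pos h0I]
    have eqJ : ∀ j, (∑ t ∈ Iset, v'' t) * u'' j + (∑ t ∈ Isetᶜ, v'' t) * v'' j = v'' j := by
      intro j
      have h := hB'mulapp i₁ j
      rw [Finset.sum_congr rfl
        (fun t _ => by rw [show B' i₁ t = v'' t from by rw [hB'row, if_neg hi₁I]])] at h
      rw [hrowsum v'' j] at h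
      rw [h, hB'row, if_neg hi₁I]
    -- the four scalar values
    have hA1 : (∑ t ∈ Iset, u'' t) + (∑ t ∈ Isetᶜ, u'' t) = 1 := by
      have h := eqI j₀
      rw [← hag] at h
      exact mul_right_cancel₀ (hu''0 j₀) (by linear_combination h)
    have hA2 : (∑ t ∈ Iset, u'' t) - (∑ t ∈ Isetᶜ, u'' t) = 1 := by
      have h := eqI j₁
      rw [hdis] at h
      exact mul_right_cancel₀ (hu''0 j₁) (by linear_combination h)
    have hA3 : (∑ t ∈ Iset, v'' t) + (∑ t ∈ Isetᶜ, v'' t) = 1 := by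
      have h := eqJ j₀
      rw [← hag] at h
      exact mul_right_cancel₀ (hu''0 j₀) (by linear_combination h)
    have hA4 : (∑ t ∈ Iset, v'' t) - (∑ t ∈ Isetᶜ, v'' t) = -1 := by
      have h := eqJ j₁
      rw [hdis] at h
      exact mul_right_cancel₀ (hu''0 j₁) (by linear_combination h)
    have hs1 : ∑ t ∈ Iset, u'' t = 1 := by linarith
    have hp1 : ∑ t ∈ Isetᶜ, u'' t = 0 := by linarith
    have hs2 : ∑ t ∈ Iset, v'' t = 0 := by linarith
    have hp2 : ∑ t ∈ Isetᶜ, v'' t = 1 := by linarith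
    -- counting
    obtain ⟨cP, hcP⟩ : ∃ x : ℕ, (Iset.filter fun i => u'' i = a).card = x := ⟨_, rfl⟩
    obtain ⟨cN, hcN⟩ : ∃ x : ℕ, (Iset.filter fun i => ¬ u'' i = a).card = x := ⟨_, rfl⟩
    obtain ⟨dP, hdP⟩ : ∃ x : ℕ, (Isetᶜ.filter fun i => u'' i = a).card = x := ⟨_, rfl⟩
    obtain ⟨dN, hdN⟩ : ∃ x : ℕ, (Isetᶜ.filter fun i => ¬ u'' i = a).card = x := ⟨_, rfl⟩
    obtain ⟨eP, heP⟩ : ∃ x : ℕ, (Iset.filter fun i => v'' i = a).card = x := ⟨_, rfl⟩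
    obtain ⟨eN, heN⟩ : ∃ x : ℕ, (Iset.filter fun i => ¬ v'' i = a).card = x := ⟨_, rfl⟩
    obtain ⟨fP, hfP⟩ : ∃ x : ℕ, (Isetᶜ.filter fun i => v'' i = a).card = x := ⟨_, rfl⟩
    obtain ⟨fN, hfN⟩ : ∃ x : ℕ, (Isetᶜ.filter fun i => ¬ v'' i = a).card = x := ⟨_, rfl⟩
    have hS1 := sum_pm Iset u'' a (fun i _ => hu''pm i)
    rw [hs1, hcP, hcN] at hS1
    have hS2 := sum_pm Isetᶜ u'' a (fun i _ => hu''pm i)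
    rw [hp1, hdP, hdN] at hS2
    have hS3 := sum_pm Iset v'' a (fun i _ => hv''pm i)
    rw [hs2, heP, heN] at hS3
    have hS4 := sum_pm Isetᶜ v'' a (fun i _ => hv''pm i)
    rw [hp2, hfP, hfN] at hS4
    have R1 : (cP : ℝ) - cN = k :=
      mul_right_cancel₀ ha0 (by linear_combination -hS1 - hka1)
    have R2 : (dP : ℝ) - dN = 0 :=
      mul_right_cancel₀ ha0 (by linear_combination -hS2)
    have R3 : (eP : ℝ) - eN = 0 :=
      mul_right_cancel₀ ha0 (by linear_combination -hS3)
    have R4 : (fP : ℝ) - fN = k :=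
      mul_right_cancel₀ ha0 (by linear_combination -hS4 - hka1)
    have R5 : (cP : ℝ) + cN = Iset.card := by
      have := Finset.card_filter_add_card_filter_not (s := Iset)
        (p := fun i => u'' i = a)
      rw [hcP, hcN] at this
      exact_mod_cast congrArg (Nat.cast (R := ℝ)) this
    have R6 : (dP : ℝ) + dN = Isetᶜ.card := by
      have := Finset.card_filter_add_card_filter_not (s := Isetᶜ)
        (p := fun i => u'' i = a)
      rw [hdP, hdN] at this
      exact_mod_cast congrArg (Nat.cast (R := ℝ)) this
    have R7 : (eP : ℝ) + eN = Iset.card := by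
      have := Finset.card_filter_add_card_filter_not (s := Iset)
        (p := fun i => v'' i = a)
      rw [heP, heN] at this
      exact_mod_cast congrArg (Nat.cast (R := ℝ)) this
    have R8 : (fP : ℝ) + fN = Isetᶜ.card := by
      have := Finset.card_filter_add_card_filter_not (s := Isetᶜ)
        (p := fun i => v'' i = a)
      rw [hfP, hfN] at this
      exact_mod_cast congrArg (Nat.cast (R := ℝ)) this
    have R9 : (Iset.card : ℝ) + Isetᶜ.card = 2 * k := by
      have := Finset.card_add_card_compl Iset
      rw [Fintype.card_fin] at this
      exact_mod_cast congrArg (Nat.cast (R := ℝ)) this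
    have hnn1 : (0:ℝ) ≤ (cN:ℝ) := Nat.cast_nonneg cN
    have hnn2 : (0:ℝ) ≤ (fN:ℝ) := Nat.cast_nonneg fN
    have hcN0 : (cN : ℝ) = 0 := by
      linarith only [R1, R2, R3, R4, R5, R6, R7, R8, R9, hk2, hnn1, hnn2]
    have hfN0 : (fN : ℝ) = 0 := by
      linarith only [R1, R2, R3, R4, R5, R6, R7, R8, R9, hk2, hnn1, hnn2]
    have hdPm : (dP : ℝ) = m := by
      linarith only [R1, R2, R3, R4, R5, R6, R7, R8, R9, hk2, hnn1, hnn2]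
    have hdNm : (dN : ℝ) = m := by
      linarith only [R1, R2, R3, R4, R5, R6, R7, R8, R9, hk2, hnn1, hnn2]
    have hePm : (eP : ℝ) = m := by
      linarith only [R1, R2, R3, R4, R5, R6, R7, R8, R9, hk2, hnn1, hnn2]
    have heNm : (eN : ℝ) = m := by
      linarith only [R1, R2, R3, R4, R5, R6, R7, R8, R9, hk2, hnn1, hnn2]
    have hcNn : cN = 0 := by exact_mod_cast hcN0
    have hfNn : fN = 0 := by exact_mod_cast hfN0
    have hdPn : dP = m := by exact_mod_cast hdPm
    have hdNn : dN = m := by exact_mod_cast hdNm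
    have hePn : eP = m := by exact_mod_cast hePm
    have heNn : eN = m := by exact_mod_cast heNm
    -- entries on the two halves
    have hIu : ∀ t ∈ Iset, u'' t = a := by
      intro t ht
      by_contra hne
      have hmem : t ∈ Iset.filter (fun i => ¬ u'' i = a) :=
        Finset.mem_filter.mpr ⟨ht, hne⟩
      have hemp : Iset.filter (fun i => ¬ u'' i = a) = ∅ :=
        Finset.card_eq_zero.mp (hcN.trans hcNn)
      rw [hemp] at hmem
      exact absurd hmem (Finset.notMem_empty t)
    have hJv : ∀ t ∈ Isetᶜ, v'' t = a := by
      intro t ht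
      by_contra hne
      have hmem : t ∈ Isetᶜ.filter (fun i => ¬ v'' i = a) :=
        Finset.mem_filter.mpr ⟨ht, hne⟩
      have hemp : Isetᶜ.filter (fun i => ¬ v'' i = a) = ∅ :=
        Finset.card_eq_zero.mp (hfN.trans hfNn)
      rw [hemp] at hmem
      exact absurd hmem (Finset.notMem_empty t)
    -- the type function
    obtain ⟨ctype, hct⟩ : ∃ c : Fin (2*k) → Fin 4, ∀ i, c i =
        if i ∈ Iset then (if v'' i = a then 0 else 1)
        else (if u'' i = a then 2 else 3) := ⟨_, fun _ => rfl⟩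
    have hfib0 : (Finset.univ.filter fun x => ctype x = 0) = Iset.filter (fun i => v'' i = a) := by
      ext x
      simp only [Finset.mem_filter, Finset.mem_univ, true_and, hct x]
      by_cases h1 : x ∈ Iset <;> by_cases h2 : v'' x = a <;> by_cases h3 : u'' x = a <;>
        simp [h1, h2, h3] <;> decide
    have hfib1 : (Finset.univ.filter fun x => ctype x = 1)
        = Iset.filter (fun i => ¬ v'' i = a) := by
      ext x
      simp only [Finset.mem_filter, Finset.mem_univ, true_and, hct x]
      by_cases h1 : x ∈ Iset <;> by_cases h2 : v'' x = a <;> by_cases h3 : u'' x = a <;>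
        simp [h1, h2, h3] <;> decide
    have hfib2 : (Finset.univ.filter fun x => ctype x = 2)
        = Isetᶜ.filter (fun i => u'' i = a) := by
      ext x
      simp only [Finset.mem_filter, Finset.mem_univ, true_and, hct x, Finset.mem_compl]
      by_cases h1 : x ∈ Iset <;> by_cases h2 : v'' x = a <;> by_cases h3 : u'' x = a <;>
        simp [h1, h2, h3] <;> decide
    have hfib3 : (Finset.univ.filter fun x => ctype x = 3)
        = Isetᶜ.filter (fun i => ¬ u'' i = a) := by
      ext x
      simp only [Finset.mem_filter, Finset.mem_univ, true_and, hct x, Finset.mem_compl]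
      by_cases h1 : x ∈ Iset <;> by_cases h2 : v'' x = a <;> by_cases h3 : u'' x = a <;>
        simp [h1, h2, h3] <;> decide
    have hctcard : ∀ y, Fintype.card {x // ctype x = y} = m := by
      intro y
      rw [Fintype.card_subtype]
      have hy : y = 0 ∨ y = 1 ∨ y = 2 ∨ y = 3 := by fin_cases y <;> decide
      rcases hy with rfl | rfl | rfl | rfl
      · rw [hfib0, heP, hePn]
      · rw [hfib1, heN, heNn]
      · rw [hfib2, hdP, hdPn]
      · rw [hfib3, hdN, hdNn]
    have hcard : ∀ y, Fintype.card {x // ctype x = y} = Fintype.card {x // c₀ x = y} := by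
      intro y
      rw [hctcard y]
      exact (fiber_card e y).symm
    have hσ := permOfFiberCard_spec ctype c₀ hcard
    -- entry formulas relating B' to G
    have hctI : ∀ i, i ∈ Iset → (ctype i = 0 ∨ ctype i = 1) := by
      intro i h
      rw [hct i, if_pos h]
      split <;> simp
    have hctJ : ∀ i, i ∉ Iset → (ctype i = 2 ∨ ctype i = 3) := by
      intro i h
      rw [hct i, if_neg h]
      split <;> simp
    have hu''G : ∀ j, u'' j = G 0 (ctype j) * a := by
      intro j
      by_cases hI : j ∈ Iset
      · rw [hIu j hI]
        rcases hctI j hI with h | h <;> rw [h]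
        · rw [g00]; ring
        · rw [g01]; ring
      · rw [hct j, if_neg hI]
        by_cases h3 : u'' j = a
        · rw [if_pos h3, g02, h3]; ring
        · have hval : u'' j = -a := (hu''pm j).resolve_left h3
          rw [if_neg h3, g03, hval]; ring
    have hv''G : ∀ j, v'' j = G 2 (ctype j) * a := by
      intro j
      by_cases hI : j ∈ Iset
      · rw [hct j, if_pos hI]
        by_cases h2 : v'' j = a
        · rw [if_pos h2, g20, h2]; ring
        · have hval : v'' j = -a := (hv''pm j).resolve_left h2
          rw [if_neg h2, g21, hval]; ring
      · rw [hJv j (Finset.mem_compl.mpr hI)]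
        rcases hctJ j hI with h | h <;> rw [h]
        · rw [g22]; ring
        · rw [g23]; ring
    have hB'G : ∀ i j, B' i j = G (ctype i) (ctype j) * a := by
      intro i j
      rw [hB'row]
      by_cases hI : i ∈ Iset
      · rw [if_pos hI, hu''G j]
        have hval : (ctype i).val < 2 := by
          rcases hctI i hI with h | h <;> rw [h] <;> decide
        congr 1
        exact (G_row0 _ _ hval).symm
      · rw [if_neg hI, hv''G j]
        have hval : 2 ≤ (ctype i).val := by
          rcases hctJ i hI with h | h <;> rw [h] <;> decide
        congr 1
        exact (G_row2 _ _ hval).symm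
    -- assemble the equivalence
    have hBB' : ∀ i j, B i j = δ i * B' i j * δ j := by
      intro i j
      have h1 := hδsq i
      have h2 := hδsq j
      rw [hB'app]
      calc B i j = (δ i * δ i) * ((δ j * δ j) * B i j) := by rw [h1, h2]; ring
        _ = δ i * (δ i * B i j * δ j) * δ j := by ring
    set σ0 := permOfFiberCard ctype c₀ hcard with hσ0_def
    refine ⟨σ0.symm, δ, hδpm, Or.inl ?_⟩
    ext i j
    rw [conj_entry]
    have hci : ctype i = c₀ (σ0.symm i) := by
      have h := hσ (σ0.symm i)
      rwa [Equiv.apply_symm_apply] at h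
    have hcj : ctype j = c₀ (σ0.symm j) := by
      have h := hσ (σ0.symm j)
      rwa [Equiv.apply_symm_apply] at h
    rw [hBB' i j, hB'G i j, hAapp, hci, hcj]
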